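/- Let k, d ≥ 1, c : Fin k → Fin d → ℕ with values in {0,1}, J ⊆ Fin k such that for every tuple i there is exactly one j ∈ J with c(j,i) = 1, and let J' ⊆ J. Define P(α) = ∑_i ∏_j α(j)^{c(j,i)}. Then for any α, ∑_{j∈J'} α(j)·(∂P/∂α(j))(α) = P(α'), where α' agrees with α except that α'(j) = 0 for all j ∈ J \ J'. -/

import Mathlib

theorem stmt_14 (k d : ℕ) (hk : 1 ≤ k) (hd : 1 ≤ d)
    (c : Fin k → Fin d → ℕ) (hc : ∀ j i, c j i = 0 ∨ c j i = 1)
    (J J' : Finset (Fin k)) (hJ' : J' ⊆ J)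
    (hJ : ∀ i : Fin d, ∃! j : Fin k, j ∈ J ∧ c j i = 1)
    (α : Fin k → ℝ) :
    (∑ j ∈ J', α j * deriv (fun x : ℝ =>
        ∑ i : Fin d, ∏ j' : Fin k, (Function.update α j x) j' ^ c j' i) (α j))
      = ∑ i : Fin d, ∏ j : Fin k,
          (if j ∈ J \ J' then (0 : ℝ) else α j) ^ c j i := by
  have hprod : ∀ (j : Fin k) (x : ℝ) (i : Fin d),
      (∏ j' : Fin k, (Function.update α j x) j' ^ c j' i)
        = x ^ c j i * ∏ j' ∈ Finset.univ.erase j, α j' ^ c j' i := by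
    intro j x i
    have h : (fun j' => (Function.update α j x) j' ^ c j' i)
        = Function.update (fun j' => α j' ^ c j' i) j (x ^ c j i) := by
      funext j'
      by_cases h : j' = j
      · subst h; simp
      · simp [Function.update_of_ne h]
    rw [h, Finset.prod_update_of_mem (Finset.mem_univ j), Finset.sdiff_singleton_eq_erase]
  -- compute each derivative
  have hderiv : ∀ j : Fin k,
      deriv (fun x : ℝ => ∑ i : Fin d, ∏ j' : Fin k, (Function.update α j x) j' ^ c j' i) (α j)
        = ∑ i : Fin d, (c j i : ℝ) * (α j) ^ (c j i - 1)
            * ∏ j' ∈ Finset.univ.erase j, α j' ^ c j' i := by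
    intro j
    have hfun : (fun x : ℝ => ∑ i : Fin d, ∏ j' : Fin k, (Function.update α j x) j' ^ c j' i)
        = fun x : ℝ => ∑ i : Fin d, x ^ c j i * ∏ j' ∈ Finset.univ.erase j, α j' ^ c j' i := by
      funext x; exact Finset.sum_congr rfl fun i _ => hprod j x i
    rw [hfun]
    rw [deriv_fun_sum (fun i _ => ((differentiable_pow (c j i)).differentiableAt).mul_const _)]
    refine Finset.sum_congr rfl fun i _ => ?_
    rw [deriv_mul_const ((differentiable_pow (c j i)).differentiableAt), deriv_pow_field]
  -- per-term simplification
  have hterm : ∀ j : Fin k, α j * deriv (fun x : ℝ =>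
      ∑ i : Fin d, ∏ j' : Fin k, (Function.update α j x) j' ^ c j' i) (α j)
      = ∑ i : Fin d, (c j i : ℝ) * ∏ j' : Fin k, α j' ^ c j' i := by
    intro j
    rw [hderiv j, Finset.mul_sum]
    refine Finset.sum_congr rfl fun i _ => ?_
    have hp : (∏ j' : Fin k, α j' ^ c j' i)
        = (α j) ^ c j i * ∏ j' ∈ Finset.univ.erase j, α j' ^ c j' i := by
      have := hprod j (α j) i
      simpa using this
    rcases hc j i with h | h <;> rw [hp, h] <;> ring
  rw [Finset.sum_congr rfl fun j _ => hterm j, Finset.sum_comm]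
  refine Finset.sum_congr rfl fun i _ => ?_
  rw [← Finset.sum_mul]
  obtain ⟨j0, ⟨hj0J, hj0c⟩, huniq⟩ := hJ i
  by_cases hj0' : j0 ∈ J'
  · have hsum : (∑ j ∈ J', (c j i : ℝ)) = 1 := by
      rw [Finset.sum_eq_single j0]
      · rw [hj0c]; norm_num
      · intro j hj hne
        rcases hc j i with h | h
        · rw [h]; norm_num
        · exact absurd (huniq j ⟨hJ' hj, h⟩) hne
      · intro h; exact absurd hj0' h
    rw [hsum, one_mul]
    refine Finset.prod_congr rfl fun j _ => ?_
    by_cases hj : j ∈ J \ J'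
    · have hc0 : c j i = 0 := by
        rcases hc j i with h | h
        · exact h
        · have := huniq j ⟨(Finset.mem_sdiff.mp hj).1, h⟩
          subst this
          exact absurd hj0' (Finset.mem_sdiff.mp hj).2
      simp [hj, hc0]
    · simp [hj]
  · have hsum : (∑ j ∈ J', (c j i : ℝ)) = 0 := by
      refine Finset.sum_eq_zero fun j hj => ?_
      rcases hc j i with h | h
      · rw [h]; norm_num
      · exact absurd (huniq j ⟨hJ' hj, h⟩ ▸ hj) hj0'
    rw [hsum, zero_mul]
    refine (Finset.prod_eq_zero (Finset.mem_univ j0) ?_).symm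
    rw [if_pos (Finset.mem_sdiff.mpr ⟨hj0J, hj0'⟩), hj0c, pow_one]
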